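/- Let σ, η > 0 and define p(b | σ, η) = ∫_{ℝⁿ} (2πσ²)^{−m/2} exp(−‖Au − b‖²/(2σ²)) · (2πη²)^{−n/2} det(T) exp(−‖Tu‖²/(2η²)) du for invertible T. Then ∂p/∂σ (b|σ,η) = (−m/σ)p(b|σ,η) + σ⁻³ p(b|σ,η)·E[‖AU − b‖² | b], so any maximizer in σ satisfies σ² = (1/m)E[‖AU − b‖² | b], where the conditional expectation is with respect to the posterior density proportional to exp(−‖Au−b‖²/(2σ²) − ‖Tu‖²/(2η²)). -/

import Mathlib

open Matrix MeasureTheory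

private lemma gauss_int {n : ℕ} {k : ℝ} (hk : 0 < k) :
    Integrable (fun u : Fin n → ℝ => Real.exp (-(k * ∑ i, u i ^ 2))) := by
  have h : (fun u : Fin n → ℝ => Real.exp (-(k * ∑ i, u i ^ 2)))
      = fun u : Fin n → ℝ => ∏ i, Real.exp (-k * (u i) ^ 2) := by
    funext u
    rw [← Real.exp_sum]
    congr 1
    simp [Finset.mul_sum]
  rw [h]
  exact Integrable.fintype_prod (fun i => integrable_exp_neg_mul_sq hk)

private lemma poly_exp_bound {k a d S : ℝ} (hk : 0 < k) (ha : 0 ≤ a) (hd : 0 ≤ d)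
    (hS : 0 ≤ S) :
    (a * S + d) * Real.exp (-(k * S)) ≤ (2 * a / k + d) * Real.exp (-(k / 2 * S)) := by
  have h1 : S * Real.exp (-(k / 2 * S)) ≤ 2 / k := by
    rw [Real.exp_neg, mul_comm, inv_mul_eq_div, div_le_div_iff₀ (Real.exp_pos _) hk]
    nlinarith [Real.add_one_le_exp (k / 2 * S), Real.exp_pos (k / 2 * S)]
  have h2 : Real.exp (-(k / 2 * S)) ≤ 1 :=
    Real.exp_le_one_iff.mpr (by nlinarith)
  have hsplit : Real.exp (-(k * S)) =
      Real.exp (-(k / 2 * S)) * Real.exp (-(k / 2 * S)) := by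
    rw [← Real.exp_add]; ring_nf
  calc (a * S + d) * Real.exp (-(k * S))
      = (a * (S * Real.exp (-(k / 2 * S))) + d * Real.exp (-(k / 2 * S))) *
          Real.exp (-(k / 2 * S)) := by rw [hsplit]; ring
    _ ≤ (a * (2 / k) + d * 1) * Real.exp (-(k / 2 * S)) := by
        apply mul_le_mul_of_nonneg_right _ (Real.exp_nonneg _)
        gcongr
    _ = (2 * a / k + d) * Real.exp (-(k / 2 * S)) := by ring

private lemma poly_gauss_int {n : ℕ} {k a d : ℝ} (hk : 0 < k) (ha : 0 ≤ a) (hd : 0 ≤ d)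
    {Q : (Fin n → ℝ) → ℝ} (hQc : Continuous Q) (hQ0 : ∀ u, 0 ≤ Q u)
    (hQb : ∀ u, Q u ≤ a * ∑ i, u i ^ 2 + d) :
    Integrable (fun u : Fin n → ℝ => Q u * Real.exp (-(k * ∑ i, u i ^ 2))) := by
  apply Integrable.mono' ((gauss_int (half_pos hk)).const_mul (2 * a / k + d))
  · exact (hQc.mul (Real.continuous_exp.comp (by continuity))).aestronglyMeasurable
  · refine Filter.Eventually.of_forall fun u => ?_
    have hS : (0:ℝ) ≤ ∑ i, u i ^ 2 := Finset.sum_nonneg fun i _ => sq_nonneg _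
    rw [Real.norm_eq_abs, abs_of_nonneg (mul_nonneg (hQ0 u) (Real.exp_nonneg _))]
    calc Q u * Real.exp (-(k * ∑ i, u i ^ 2))
        ≤ (a * ∑ i, u i ^ 2 + d) * Real.exp (-(k * ∑ i, u i ^ 2)) := by
          exact mul_le_mul_of_nonneg_right (hQb u) (Real.exp_nonneg _)
      _ ≤ (2 * a / k + d) * Real.exp (-(k / 2 * ∑ i, u i ^ 2)) :=
          poly_exp_bound hk ha hd hS

set_option maxHeartbeats 1000000 in
theorem marginal_likelihood_sigma_stationarity
    (m n : ℕ) (hm : 0 < m)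
    (A : Matrix (Fin m) (Fin n) ℝ) (T : Matrix (Fin n) (Fin n) ℝ)
    (hT : IsUnit T.det)
    (b : Fin m → ℝ) (η : ℝ) (hη : 0 < η) (σ : ℝ) (hσ : 0 < σ)
    (p : ℝ → ℝ)
    (hp : ∀ s : ℝ, p s =
      ∫ u : Fin n → ℝ,
        (2 * Real.pi * s ^ 2) ^ (-(m : ℝ) / 2) *
          Real.exp (-(∑ i, (A.mulVec u - b) i ^ 2) / (2 * s ^ 2)) *
          ((2 * Real.pi * η ^ 2) ^ (-(n : ℝ) / 2) * T.det *
            Real.exp (-(∑ i, (T.mulVec u) i ^ 2) / (2 * η ^ 2))))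
    (E : ℝ)
    (hE : E =
      (∫ u : Fin n → ℝ, (∑ i, (A.mulVec u - b) i ^ 2) *
          Real.exp (-(∑ i, (A.mulVec u - b) i ^ 2) / (2 * σ ^ 2)
            - (∑ i, (T.mulVec u) i ^ 2) / (2 * η ^ 2))) /
      (∫ u : Fin n → ℝ,
          Real.exp (-(∑ i, (A.mulVec u - b) i ^ 2) / (2 * σ ^ 2)
            - (∑ i, (T.mulVec u) i ^ 2) / (2 * η ^ 2)))) :
    HasDerivAt p (-(m : ℝ) / σ * p σ + (σ ^ 3)⁻¹ * p σ * E) σ ∧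
    ((∀ s : ℝ, 0 < s → p s ≤ p σ) → σ ^ 2 = E / m) := by
  classical
  -- notation
  set Q : (Fin n → ℝ) → ℝ := fun u => ∑ i, (A.mulVec u - b) i ^ 2 with hQdef
  set R : (Fin n → ℝ) → ℝ := fun u => ∑ i, (T.mulVec u) i ^ 2 with hRdef
  set S : (Fin n → ℝ) → ℝ := fun u => ∑ i, u i ^ 2 with hSdef
  have hQ0 : ∀ u, 0 ≤ Q u := fun u => Finset.sum_nonneg fun i _ => sq_nonneg _
  have hR0 : ∀ u, 0 ≤ R u := fun u => Finset.sum_nonneg fun i _ => sq_nonneg _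
  have hS0 : ∀ u, 0 ≤ S u := fun u => Finset.sum_nonneg fun i _ => sq_nonneg _
  have hAc : Continuous fun u : Fin n → ℝ => A.mulVec u :=
    LinearMap.continuous_of_finiteDimensional (A.mulVecLin)
  have hQc : Continuous Q := by
    rw [hQdef]
    apply continuous_finset_sum
    intro i _
    exact ((continuous_apply i).comp (hAc.sub continuous_const)).pow 2
  have hRc : Continuous R := by
    rw [hRdef]
    apply continuous_finset_sum
    intro i _
    exact ((continuous_apply i).comp
      (LinearMap.continuous_of_finiteDimensional (T.mulVecLin))).pow 2
  -- quadratic upper bound for Q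
  obtain ⟨a, d, ha, hd, hQub⟩ :
      ∃ a d : ℝ, 0 ≤ a ∧ 0 ≤ d ∧ ∀ u, Q u ≤ a * S u + d := by
    refine ⟨2 * ∑ i, ∑ j, A i j ^ 2, 2 * ∑ i, b i ^ 2,
      by positivity, by positivity, fun u => ?_⟩
    have h1 : ∀ i, (A.mulVec u - b) i ^ 2 ≤
        2 * ((∑ j, A i j ^ 2) * S u) + 2 * b i ^ 2 := by
      intro i
      have hcs : (A.mulVec u) i ^ 2 ≤ (∑ j, A i j ^ 2) * S u := by
        simpa [Matrix.mulVec, dotProduct, hSdef] using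
          Finset.sum_mul_sq_le_sq_mul_sq Finset.univ (fun j => A i j) u
      have he : (A.mulVec u - b) i = (A.mulVec u) i - b i := rfl
      rw [he]
      nlinarith [sq_nonneg ((A.mulVec u) i + b i)]
    calc Q u ≤ ∑ i, (2 * ((∑ j, A i j ^ 2) * S u) + 2 * b i ^ 2) :=
          Finset.sum_le_sum fun i _ => h1 i
      _ = (2 * ∑ i, ∑ j, A i j ^ 2) * S u + 2 * ∑ i, b i ^ 2 := by
          rw [Finset.sum_add_distrib]
          congr 1
          · rw [← Finset.mul_sum, ← Finset.sum_mul]; ring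
          · rw [Finset.mul_sum]
  -- lower bound for R
  obtain ⟨c, hc, hRlb⟩ : ∃ c : ℝ, 0 < c ∧ ∀ u, c * S u ≤ R u := by
    set M : ℝ := ∑ j, ∑ i, (T⁻¹) j i ^ 2 with hM
    have hM0 : 0 ≤ M := Finset.sum_nonneg fun j _ => Finset.sum_nonneg fun i _ => sq_nonneg _
    refine ⟨(M + 1)⁻¹, by positivity, fun u => ?_⟩
    have hinv : T⁻¹.mulVec (T.mulVec u) = u := by
      rw [Matrix.mulVec_mulVec, Matrix.nonsing_inv_mul T hT, Matrix.one_mulVec]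
    have h1 : ∀ j, u j ^ 2 ≤ (∑ i, (T⁻¹) j i ^ 2) * R u := by
      intro j
      have := Finset.sum_mul_sq_le_sq_mul_sq Finset.univ (fun i => (T⁻¹) j i)
        (fun i => (T.mulVec u) i)
      have he : u j = ∑ i, (T⁻¹) j i * (T.mulVec u) i := by
        conv_lhs => rw [← hinv]
        rfl
      rw [he]
      simpa [hRdef] using this
    have h2 : S u ≤ M * R u := by
      calc S u ≤ ∑ j, (∑ i, (T⁻¹) j i ^ 2) * R u := Finset.sum_le_sum fun j _ => h1 j
        _ = M * R u := by rw [← Finset.sum_mul]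
    have h3 : S u ≤ (M + 1) * R u := le_trans h2 (by nlinarith [hR0 u])
    rw [inv_mul_le_iff₀ (by positivity)]
    linarith [h3]
  -- Gaussian domination
  set k : ℝ := c / (2 * η ^ 2) with hkdef
  have hk : 0 < k := by positivity
  set F : ℝ → (Fin n → ℝ) → ℝ :=
    fun x u => Real.exp (-(Q u) / (2 * x ^ 2) - R u / (2 * η ^ 2)) with hFdef
  set F' : ℝ → (Fin n → ℝ) → ℝ := fun x u => Q u / x ^ 3 * F x u with hF'def
  have hFpos : ∀ x u, 0 < F x u := fun x u => Real.exp_pos _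
  have hFle : ∀ x u, F x u ≤ Real.exp (-(k * S u)) := by
    intro x u
    rw [hFdef]
    apply Real.exp_le_exp.mpr
    have h1 : -(Q u) / (2 * x ^ 2) ≤ 0 :=
      div_nonpos_iff.mpr (Or.inr ⟨neg_nonpos.mpr (hQ0 u), by positivity⟩)
    have h2 : k * S u ≤ R u / (2 * η ^ 2) := by
      rw [hkdef, div_mul_eq_mul_div]
      gcongr
      exact hRlb u
    linarith
  have hFmeas : ∀ x : ℝ, AEStronglyMeasurable (F x) volume := by
    intro x
    rw [hFdef]
    exact (Real.continuous_exp.comp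
      ((hQc.neg.div_const _).sub (hRc.div_const _))).aestronglyMeasurable
  have hF'cont : ∀ x : ℝ, Continuous (F' x) := by
    intro x
    rw [hF'def, hFdef]
    exact (hQc.div_const _).mul (Real.continuous_exp.comp
      ((hQc.neg.div_const _).sub (hRc.div_const _)))
  have hFint : ∀ x : ℝ, Integrable (F x) := by
    intro x
    apply Integrable.mono' (gauss_int hk) (hFmeas x)
    refine Filter.Eventually.of_forall fun u => ?_
    rw [Real.norm_eq_abs, abs_of_nonneg (hFpos x u).le]
    exact hFle x u
  have hQFint : Integrable (fun u => Q u * F σ u) := by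
    apply Integrable.mono' (poly_gauss_int hk ha hd hQc hQ0 (fun u => hQub u))
    · exact (hQc.mul (Real.continuous_exp.comp ((hQc.neg.div_const _).sub (hRc.div_const _)))).aestronglyMeasurable
    · refine Filter.Eventually.of_forall fun u => ?_
      rw [Real.norm_eq_abs, abs_of_nonneg (mul_nonneg (hQ0 u) (hFpos σ u).le)]
      exact mul_le_mul_of_nonneg_left (hFle σ u) (hQ0 u)
  -- dominated derivative
  set bnd : (Fin n → ℝ) → ℝ :=
    fun u => ((σ / 2) ^ 3)⁻¹ * (Q u * Real.exp (-(k * S u))) with hbnddef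
  have hbndint : Integrable bnd :=
    (poly_gauss_int hk ha hd hQc hQ0 (fun u => hQub u)).const_mul _
  have hball : ∀ x ∈ Metric.ball σ (σ / 2), σ / 2 < x := by
    intro x hx
    rw [Metric.mem_ball, Real.dist_eq, abs_lt] at hx
    linarith [hx.1]
  have h_bound : ∀ᵐ u : Fin n → ℝ, ∀ x ∈ Metric.ball σ (σ / 2), ‖F' x u‖ ≤ bnd u := by
    refine Filter.Eventually.of_forall fun u => fun x hx => ?_
    have hxpos : 0 < x := lt_trans (by positivity) (hball x hx)
    rw [hF'def, Real.norm_eq_abs,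
      abs_of_nonneg (mul_nonneg (div_nonneg (hQ0 u) (by positivity)) (hFpos x u).le),
      hbnddef]
    have h1 : Q u / x ^ 3 ≤ ((σ / 2) ^ 3)⁻¹ * Q u := by
      rw [div_eq_mul_inv, mul_comm]
      apply mul_le_mul_of_nonneg_right _ (hQ0 u)
      apply inv_anti₀ (by positivity)
      gcongr
      exact (hball x hx).le
    calc Q u / x ^ 3 * F x u ≤ ((σ / 2) ^ 3)⁻¹ * Q u * Real.exp (-(k * S u)) := by
          apply mul_le_mul h1 (hFle x u) (hFpos x u).le
          positivity
      _ = ((σ / 2) ^ 3)⁻¹ * (Q u * Real.exp (-(k * S u))) := by ring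
  have h_diff : ∀ᵐ u : Fin n → ℝ, ∀ x ∈ Metric.ball σ (σ / 2),
      HasDerivAt (fun y => F y u) (F' x u) x := by
    refine Filter.Eventually.of_forall fun u => fun x hx => ?_
    have hxpos : 0 < x := lt_trans (by positivity) (hball x hx)
    have hx0 : x ≠ 0 := hxpos.ne'
    have h2x : HasDerivAt (fun y : ℝ => y ^ 2) (2 * x) x := by
      simpa using hasDerivAt_pow 2 x
    have hinvd : HasDerivAt (fun y : ℝ => (y ^ 2)⁻¹) (-(2 * x) / (x ^ 2) ^ 2) x :=
      h2x.inv (pow_ne_zero 2 hx0)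
    have harg : HasDerivAt
        (fun y : ℝ => -(Q u) * (2⁻¹ * (y ^ 2)⁻¹) - R u / (2 * η ^ 2))
        (-(Q u) * (2⁻¹ * (-(2 * x) / (x ^ 2) ^ 2))) x :=
      ((hinvd.const_mul 2⁻¹).const_mul (-(Q u))).sub_const _
    have hexp := harg.exp
    have hfun : (fun y : ℝ => Real.exp (-(Q u) * (2⁻¹ * (y ^ 2)⁻¹) - R u / (2 * η ^ 2)))
        = fun y => F y u := by
      funext y
      rw [hFdef]
      congr 1
      ring
    rw [hfun] at hexp
    convert hexp using 1
    simp only [hF'def, hFdef]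
    rw [show -Q u / (2 * x ^ 2) - R u / (2 * η ^ 2)
      = -Q u * (2⁻¹ * (x ^ 2)⁻¹) - R u / (2 * η ^ 2) by ring]
    field_simp
  obtain ⟨-, hJd⟩ := hasDerivAt_integral_of_dominated_loc_of_deriv_le
    (Metric.ball_mem_nhds σ (half_pos hσ)) (Filter.Eventually.of_forall fun x => hFmeas x) (hFint σ)
    ((hF'cont σ).aestronglyMeasurable) h_bound hbndint h_diff
  set J : ℝ → ℝ := fun x => ∫ u, F x u with hJdef
  set K : ℝ := ∫ u, Q u * F σ u with hKdef
  have hDJ : HasDerivAt J ((σ ^ 3)⁻¹ * K) σ := by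
    have heq : (∫ u, F' σ u) = (σ ^ 3)⁻¹ * K := by
      rw [hKdef, ← integral_const_mul]
      congr 1; funext u
      rw [hF'def]; ring
    rw [hJdef, ← heq]
    exact hJd
  set C : ℝ → ℝ := fun x => (2 * Real.pi * x ^ 2) ^ (-(m:ℝ)/2) with hCdef
  set cst : ℝ := (2 * Real.pi * η ^ 2) ^ (-(n:ℝ)/2) * T.det with hcstdef
  have hCσpos : 0 < C σ := Real.rpow_pos_of_pos (by positivity) _
  have hbase : HasDerivAt (fun x : ℝ => 2 * Real.pi * x ^ 2) (2 * Real.pi * (2 * σ)) σ := by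
    simpa using (hasDerivAt_pow 2 σ).const_mul (2 * Real.pi)
  have hC : HasDerivAt C (-(m:ℝ)/σ * C σ) σ := by
    have h := hbase.rpow_const (p := -(m:ℝ)/2)
      (Or.inl (by positivity : (0:ℝ) < 2 * Real.pi * σ ^ 2).ne')
    convert h using 1
    simp only [hCdef]
    rw [Real.rpow_sub_one (by positivity : (0:ℝ) < 2 * Real.pi * σ ^ 2).ne']
    field_simp
  have hpfun : p = fun x => C x * (cst * J x) := by
    funext x
    rw [hp x]
    simp only [hJdef]
    rw [← integral_const_mul, ← integral_const_mul]
    congr 1; funext u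
    simp only [hFdef, hCdef, hcstdef, hQdef, hRdef]
    rw [show -(∑ i, (A.mulVec u - b) i ^ 2) / (2 * x ^ 2)
          - (∑ i, (T.mulVec u) i ^ 2) / (2 * η ^ 2)
        = -(∑ i, (A.mulVec u - b) i ^ 2) / (2 * x ^ 2)
          + -(∑ i, (T.mulVec u) i ^ 2) / (2 * η ^ 2) by ring, Real.exp_add]
    ring
  have hJσpos : 0 < J σ := by
    simp only [hJdef]
    rw [integral_pos_iff_support_of_nonneg (fun u => (hFpos σ u).le) (hFint σ)]
    have hs : Function.support (F σ) = Set.univ :=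
      Set.eq_univ_iff_forall.mpr fun u => (hFpos σ u).ne'
    rw [hs]
    exact Measure.measure_univ_pos.mpr (NeZero.ne _)
  have hE' : E = K / J σ := by
    rw [hE, hKdef]
  have hder : HasDerivAt (fun x => C x * (cst * J x))
      ((-(m:ℝ)/σ * C σ) * (cst * J σ) + C σ * (cst * ((σ ^ 3)⁻¹ * K))) σ :=
    hC.mul (hDJ.const_mul cst)
  clear_value cst C K J
  have hpσval : p σ = C σ * (cst * J σ) := by rw [hpfun]
  have hder2 : HasDerivAt (fun x => C x * (cst * J x))
      (-(m:ℝ)/σ * (C σ * (cst * J σ)) + (σ ^ 3)⁻¹ * (C σ * (cst * J σ)) * E) σ := by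
    convert hder using 1
    rw [hE']
    have h : K / J σ * J σ = K := div_mul_cancel₀ K hJσpos.ne'
    linear_combination ((σ ^ 3)⁻¹ * C σ * cst) * h
  rw [← hpfun] at hder2
  have hpσ : p σ ≠ 0 := by
    rw [hpσval]
    apply mul_ne_zero hCσpos.ne'
    apply mul_ne_zero _ hJσpos.ne'
    rw [hcstdef]
    exact mul_ne_zero (Real.rpow_pos_of_pos (by positivity) _).ne' hT.ne_zero
  have hder3 : HasDerivAt p
      (-(m:ℝ)/σ * p σ + (σ ^ 3)⁻¹ * p σ * E) σ := by
    rw [hpσval]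
    exact hder2
  refine ⟨hder3, fun hmax => ?_⟩
  have h0 : -(m:ℝ)/σ * p σ + (σ ^ 3)⁻¹ * p σ * E = 0 :=
    IsLocalMax.hasDerivAt_eq_zero
      ((eventually_gt_nhds hσ).mono fun s hs => hmax s hs) hder3
  have h1 : -(m:ℝ)/σ + (σ ^ 3)⁻¹ * E = 0 := by
    have h2 : (-(m:ℝ)/σ + (σ ^ 3)⁻¹ * E) * p σ = 0 := by
      linear_combination h0
    rcases mul_eq_zero.mp h2 with h | h
    · exact h
    · exact absurd h hpσ
  have hm' : (m:ℝ) ≠ 0 := Nat.cast_ne_zero.mpr hm.ne'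
  have hσ' : σ ≠ 0 := hσ.ne'
  field_simp at h1
  have hE2 : E = (m:ℝ) * σ ^ 2 := by
    have h2 : E * σ = ((m:ℝ) * σ ^ 2) * σ := by linear_combination σ * h1
    exact mul_right_cancel₀ hσ' h2
  rw [hE2]
  field_simp
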